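/- Let P = {a^2 : a ∈ GF(3^m)*} be the set of nonzero squares in GF(3^m), m ≥ 2, and let B = {{a^2, b^2, (a+b)^2, (a-b)^2} : a, b ∈ GF(3^m)*, a ≠ ±b}. Then each block in B has exactly 4 elements, and (P, B) is a Steiner system S(2, 4, (3^m-1)/2). -/
import Mathlib
set_option linter.unusedSectionVars false
set_option maxHeartbeats 1000000

section Aux

variable {K : Type*} [Field K] [DecidableEq K]

def blockF (a b : K) : Finset K := {a ^ 2, b ^ 2, (a + b) ^ 2, (a - b) ^ 2}

lemma sq_eq' {u v : K} (h : u ^ 2 = v ^ 2) : u = v ∨ u = -v := by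
  have h2 : (u - v) * (u + v) = 0 := by linear_combination h
  rcases mul_eq_zero.mp h2 with h | h
  · exact Or.inl (sub_eq_zero.mp h)
  · exact Or.inr (eq_neg_of_add_eq_zero_left h)

lemma mem_blockF {x u v : K} :
    x ∈ blockF u v ↔ (x = u ^ 2 ∨ x = v ^ 2 ∨ x = (u + v) ^ 2 ∨ x = (u - v) ^ 2) := by
  simp [blockF]

lemma blockF_neg_left (u v : K) : blockF (-u) v = blockF u v := by
  unfold blockF
  rw [show -u + v = -(u - v) by ring, show -u - v = -(u + v) by ring, neg_sq, neg_sq, neg_sq]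
  ext x; simp only [Finset.mem_insert, Finset.mem_singleton]; tauto

lemma blockF_neg_right (u v : K) : blockF u (-v) = blockF u v := by
  unfold blockF
  rw [show u + -v = u - v by ring, show u - -v = u + v by ring, neg_sq]
  ext x; simp only [Finset.mem_insert, Finset.mem_singleton]; tauto

lemma blockF_comm (u v : K) : blockF u v = blockF v u := by
  unfold blockF
  rw [show v - u = -(u - v) by ring, neg_sq, add_comm v u]
  ext x; simp only [Finset.mem_insert, Finset.mem_singleton]; tauto

variable (h3 : (3 : K) = 0)
include h3

lemma blockE2 (c d : K) : blockF c (c + d) = blockF c d := by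
  unfold blockF
  rw [show c + (c + d) = -(c - d) by linear_combination c * h3,
    show c - (c + d) = -d by ring, neg_sq, neg_sq]
  ext x; simp only [Finset.mem_insert, Finset.mem_singleton]; tauto

lemma blockE3 (c d : K) : blockF c (c - d) = blockF c d := by
  unfold blockF
  rw [show c + (c - d) = -(c + d) by linear_combination c * h3,
    show c - (c - d) = d by ring, neg_sq]
  ext x; simp only [Finset.mem_insert, Finset.mem_singleton]; tauto

lemma blockE4 (c d : K) : blockF d (c + d) = blockF c d := by
  unfold blockF
  rw [show d + (c + d) = c - d by linear_combination d * h3,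
    show d - (c + d) = -c by ring, neg_sq]
  ext x; simp only [Finset.mem_insert, Finset.mem_singleton]; tauto

lemma blockE5 (c d : K) : blockF d (c - d) = blockF c d := by
  unfold blockF
  rw [show d + (c - d) = c by ring,
    show d - (c - d) = -(c + d) by linear_combination d * h3, neg_sq]
  ext x; simp only [Finset.mem_insert, Finset.mem_singleton]; tauto

lemma blockE6 (c d : K) : blockF (c + d) (c - d) = blockF c d := by
  unfold blockF
  rw [show c + d + (c - d) = -c by linear_combination c * h3,
    show c + d - (c - d) = -d by linear_combination d * h3, neg_sq, neg_sq]
  ext x; simp only [Finset.mem_insert, Finset.mem_singleton]; tauto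

omit h3 in
lemma blockF_cases {a c d : K} (h : a ^ 2 ∈ blockF c d) :
    a = c ∨ a = -c ∨ a = d ∨ a = -d ∨ a = c + d ∨ a = -(c + d) ∨
      a = c - d ∨ a = -(c - d) := by
  rcases mem_blockF.mp h with h | h | h | h <;> rcases sq_eq' h with h | h <;> tauto

lemma blockF_card (a b : K) (ha : a ≠ 0) (hb : b ≠ 0) (hab : a ≠ b) (hab' : a ≠ -b) :
    (blockF a b).card = 4 := by
  have d12 : a ^ 2 ≠ b ^ 2 := by
    intro h; rcases sq_eq' h with h | h
    · exact hab h
    · exact hab' h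
  have d13 : a ^ 2 ≠ (a + b) ^ 2 := by
    intro h; rcases sq_eq' h with h | h
    · exact hb (by linear_combination -h)
    · exact hab (by linear_combination -h + a * h3)
  have d14 : a ^ 2 ≠ (a - b) ^ 2 := by
    intro h; rcases sq_eq' h with h | h
    · exact hb (by linear_combination h)
    · exact hab' (by linear_combination -h + a * h3)
  have d23 : b ^ 2 ≠ (a + b) ^ 2 := by
    intro h; rcases sq_eq' h with h | h
    · exact ha (by linear_combination -h)
    · exact hab (by linear_combination h - b * h3)
  have d24 : b ^ 2 ≠ (a - b) ^ 2 := by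
    intro h; rcases sq_eq' h with h | h
    · exact hab' (by linear_combination -h + b * h3)
    · exact ha (by linear_combination h)
  have d34 : (a + b) ^ 2 ≠ (a - b) ^ 2 := by
    intro h; rcases sq_eq' h with h | h
    · exact hb (by linear_combination 2 * h - b * h3)
    · exact ha (by linear_combination 2 * h - a * h3)
  unfold blockF
  rw [Finset.card_insert_of_notMem (by simp [d12, d13, d14]),
    Finset.card_insert_of_notMem (by simp [d23, d24]),
    Finset.card_insert_of_notMem (by simp [d34]), Finset.card_singleton]

lemma blockF_unique {a b c d : K}
    (hcd : a ^ 2 ≠ b ^ 2)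
    (hx : a ^ 2 ∈ blockF c d) (hy : b ^ 2 ∈ blockF c d) :
    blockF c d = blockF a b := by
  have key : ∀ u v : K,
      (u = c ∨ u = d ∨ u = c + d ∨ u = c - d) →
      (v = c ∨ v = d ∨ v = c + d ∨ v = c - d) →
      u ^ 2 ≠ v ^ 2 → blockF c d = blockF u v := by
    intro u v hu hv hne
    rcases hu with h | h | h | h <;> rcases hv with h' | h' | h' | h' <;>
      rw [h, h'] at hne ⊢ <;>
      first
        | exact absurd rfl hne
        | rfl
        | exact (blockE2 h3 c d).symm
        | exact (blockE3 h3 c d).symm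
        | exact (blockE4 h3 c d).symm
        | exact (blockE5 h3 c d).symm
        | exact (blockE6 h3 c d).symm
        | exact blockF_comm c d
        | exact ((blockE2 h3 c d).symm.trans (blockF_comm c (c + d)))
        | exact ((blockE3 h3 c d).symm.trans (blockF_comm c (c - d)))
        | exact ((blockE4 h3 c d).symm.trans (blockF_comm d (c + d)))
        | exact ((blockE5 h3 c d).symm.trans (blockF_comm d (c - d)))
        | exact ((blockE6 h3 c d).symm.trans (blockF_comm (c + d) (c - d)))
  rcases blockF_cases hx with h | h | h | h | h | h | h | h <;>
    rcases blockF_cases hy with h' | h' | h' | h' | h' | h' | h' | h' <;>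
    rw [h, h'] at hcd ⊢ <;>
    (try simp only [blockF_neg_left, blockF_neg_right]) <;>
    (try simp only [neg_sq] at hcd) <;>
    exact key _ _ (by tauto) (by tauto) hcd

end Aux

theorem stmt_17 (m : ℕ) (hm : 2 ≤ m) (K : Type*) [Field K] [Fintype K] [DecidableEq K]
    (hcard : Fintype.card K = 3 ^ m) :
    (∀ a b : K, a ≠ 0 → b ≠ 0 → a ≠ b → a ≠ -b →
      ({a ^ 2, b ^ 2, (a + b) ^ 2, (a - b) ^ 2} : Finset K).card = 4) ∧
    Nat.card {x : K // ∃ a : K, a ≠ 0 ∧ x = a ^ 2} = (3 ^ m - 1) / 2 ∧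
    (∀ x y : K, (∃ a : K, a ≠ 0 ∧ x = a ^ 2) → (∃ a : K, a ≠ 0 ∧ y = a ^ 2) → x ≠ y →
      ∃! S : Finset K,
        (∃ a b : K, a ≠ 0 ∧ b ≠ 0 ∧ a ≠ b ∧ a ≠ -b ∧
          S = {a ^ 2, b ^ 2, (a + b) ^ 2, (a - b) ^ 2}) ∧ x ∈ S ∧ y ∈ S) := by
  -- characteristic 3
  have h3 : (3 : K) = 0 := by
    haveI : CharP K (ringChar K) := ringChar.charP K
    obtain ⟨n, hp, hcard'⟩ := FiniteField.card K (ringChar K)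
    rw [hcard] at hcard'
    have hdvd : ringChar K ∣ 3 ^ m := hcard' ▸ dvd_pow_self _ n.pos.ne'
    have h33 : ringChar K = 3 :=
      (Nat.prime_dvd_prime_iff_eq hp (by norm_num)).mp (hp.dvd_of_dvd_pow hdvd)
    have : CharP K 3 := h33 ▸ ringChar.charP K
    exact CharP.cast_eq_zero K 3
  refine ⟨fun a b ha hb hab hab' => blockF_card h3 a b ha hb hab hab', ?_, ?_⟩
  · -- counting
    classical
    rw [Nat.card_eq_fintype_card, Fintype.card_subtype]
    set T : Finset K := Finset.univ.filter (fun x : K => x ≠ 0) with hT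
    set S : Finset K := T.image (· ^ 2) with hS
    have hset : Finset.univ.filter (fun x : K => ∃ a : K, a ≠ 0 ∧ x = a ^ 2) = S := by
      ext x
      simp only [hS, hT, Finset.mem_filter, Finset.mem_univ, true_and, Finset.mem_image]
      constructor
      · rintro ⟨a, ha, rfl⟩; exact ⟨a, ha, rfl⟩
      · rintro ⟨a, ha, rfl⟩; exact ⟨a, ha, rfl⟩
    rw [hset]
    have hTcard : T.card = 3 ^ m - 1 := by
      rw [hT, Finset.filter_ne', Finset.card_erase_of_mem (Finset.mem_univ 0),
        Finset.card_univ, hcard]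
    have hfib : ∀ y ∈ S, (T.filter fun x => x ^ 2 = y).card = 2 := by
      intro y hy
      rw [hS] at hy
      obtain ⟨a, haT, rfl⟩ := Finset.mem_image.mp hy
      have ha : a ≠ 0 := (Finset.mem_filter.mp haT).2
      have hne : a ≠ -a := by
        intro h
        exact ha (by linear_combination -h + a * h3)
      have : (T.filter fun x => x ^ 2 = a ^ 2) = {a, -a} := by
        ext x
        simp only [hT, Finset.mem_filter, Finset.mem_univ, true_and, Finset.mem_insert,
          Finset.mem_singleton]
        constructor
        · rintro ⟨hx0, hx⟩; exact sq_eq' hx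
        · rintro (rfl | rfl)
          · exact ⟨ha, rfl⟩
          · exact ⟨neg_ne_zero.mpr ha, by ring⟩
      rw [this, Finset.card_insert_of_notMem (by simpa using hne), Finset.card_singleton]
    have hsum : T.card = ∑ y ∈ S, (T.filter fun x => x ^ 2 = y).card :=
      Finset.card_eq_sum_card_fiberwise (by
        intro x hx
        exact Finset.mem_image.mpr ⟨x, hx, rfl⟩)
    rw [Finset.sum_congr rfl hfib, Finset.sum_const, smul_eq_mul] at hsum
    have h2 : 2 * S.card = 3 ^ m - 1 := by omega
    have hpow : 1 ≤ 3 ^ m := Nat.one_le_pow _ _ (by norm_num)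
    omega
  · -- Steiner property
    rintro x y ⟨a, ha, rfl⟩ ⟨b, hb, rfl⟩ hxy
    have hab : a ≠ b := by rintro rfl; exact hxy rfl
    have hab' : a ≠ -b := by rintro rfl; exact hxy (by ring)
    refine ⟨blockF a b, ⟨⟨a, b, ha, hb, hab, hab', rfl⟩, ?_, ?_⟩, ?_⟩
    · simp [blockF]
    · simp [blockF]
    · rintro S' ⟨⟨c, d, hc, hd, hcd, hcd', rfl⟩, hxS, hyS⟩
      exact blockF_unique h3 hxy hxS hyS
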